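/- Let f ∈ C_K[z] be a non-constant polynomial, let D̄_r(c) be a closed disk (r > 0), and let s > 0 be such that f(D̄_r(c)) = D̄_s(f(c)). Then for all x, y ∈ D̄_r(c), |f(x) − f(y)| ≤ (s/r)·|x − y|. -/

import Mathlib

open Polynomial

lemma my_norm_sub_le_max {K : Type*} [NontriviallyNormedField K] [IsUltrametricDist K] (a b : K) :
    ‖a - b‖ ≤ max ‖a‖ ‖b‖ := by
  rw [sub_eq_add_neg]
  simpa using IsUltrametricDist.norm_add_le_max a (-b)

lemma my_coeff_bound {K : Type*} [NontriviallyNormedField K] [IsUltrametricDist K]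
    {r : ℝ} (hr : 0 < r) (t : Multiset K) (ht : ∀ ρ ∈ t, r ≤ ‖ρ‖) (i : ℕ) :
    ‖((t.map fun ρ => X - C ρ).prod).coeff i‖ * r ^ i ≤
      ‖((t.map fun ρ => X - C ρ).prod).coeff 0‖ := by
  induction t using Multiset.induction generalizing i with
  | empty =>
    simp only [Multiset.map_zero, Multiset.prod_zero]
    cases i with
    | zero => simp
    | succ j => rw [coeff_one]; simp
  | cons ρ t ih =>
    have hρ : r ≤ ‖ρ‖ := ht ρ (Multiset.mem_cons_self _ _)
    have ht' : ∀ x ∈ t, r ≤ ‖x‖ := fun x hx => ht x (Multiset.mem_cons_of_mem hx)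
    set Q := (t.map fun ρ => X - C ρ).prod with hQ
    have hprod : ((ρ ::ₘ t).map fun ρ => X - C ρ).prod = (X - C ρ) * Q := by
      rw [Multiset.map_cons, Multiset.prod_cons]
    rw [hprod]
    have h0 : ((X - C ρ) * Q).coeff 0 = -ρ * Q.coeff 0 := by
      rw [mul_coeff_zero]; simp
    have hQ0 : (0:ℝ) ≤ ‖Q.coeff 0‖ := norm_nonneg _
    cases i with
    | zero => rw [pow_zero, mul_one]
    | succ j =>
      have hc : ((X - C ρ) * Q).coeff (j+1) = Q.coeff j - ρ * Q.coeff (j+1) := by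
        rw [sub_mul, coeff_sub, coeff_X_mul, coeff_C_mul]
      rw [hc, h0, norm_mul, norm_neg]
      have hmax := my_norm_sub_le_max (Q.coeff j) (ρ * Q.coeff (j+1))
      rcases max_cases ‖Q.coeff j‖ ‖ρ * Q.coeff (j+1)‖ with ⟨he, _⟩ | ⟨he, _⟩ <;>
        rw [he] at hmax
      · calc ‖Q.coeff j - ρ * Q.coeff (j+1)‖ * r ^ (j+1)
            ≤ ‖Q.coeff j‖ * r ^ (j+1) :=
              mul_le_mul_of_nonneg_right hmax (by positivity)
          _ = (‖Q.coeff j‖ * r ^ j) * r := by ring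
          _ ≤ ‖Q.coeff 0‖ * r := mul_le_mul_of_nonneg_right (ih ht' j) hr.le
          _ ≤ ‖ρ‖ * ‖Q.coeff 0‖ := by
              rw [mul_comm]; exact mul_le_mul_of_nonneg_right hρ hQ0
      · calc ‖Q.coeff j - ρ * Q.coeff (j+1)‖ * r ^ (j+1)
            ≤ ‖ρ * Q.coeff (j+1)‖ * r ^ (j+1) :=
              mul_le_mul_of_nonneg_right hmax (by positivity)
          _ = ‖ρ‖ * (‖Q.coeff (j+1)‖ * r ^ (j+1)) := by rw [norm_mul]; ring
          _ ≤ ‖ρ‖ * ‖Q.coeff 0‖ :=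
              mul_le_mul_of_nonneg_left (ih ht' (j+1)) (norm_nonneg _)

lemma my_exists_norm_btwn (K : Type*) [NontriviallyNormedField K] [IsAlgClosed K]
    {a b : ℝ} (ha : 0 < a) (hab : a < b) : ∃ w : K, a < ‖w‖ ∧ ‖w‖ < b := by
  obtain ⟨x, hx⟩ := NormedField.exists_one_lt_norm K
  have hβ : (0:ℝ) < ‖x‖ := lt_trans one_pos hx
  obtain ⟨q, hq1, hq2⟩ := exists_rat_btwn (Real.logb_lt_logb hx ha hab)
  set m : ℕ := q.den with hm
  set k : ℤ := q.num with hk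
  have hm0 : 0 < m := q.pos
  have hdeg : ((X : K[X]) ^ m - C (x ^ k)).degree ≠ 0 := by
    rw [degree_X_pow_sub_C hm0]
    exact_mod_cast Nat.cast_injective.ne_iff.mpr hm0.ne'
  obtain ⟨u, hu⟩ := IsAlgClosed.exists_root _ hdeg
  have hum : u ^ m = x ^ k := by
    rw [IsRoot, eval_sub, eval_pow, eval_X, eval_C, sub_eq_zero] at hu
    exact hu
  have hnorm : ‖u‖ = ‖x‖ ^ ((q : ℝ)) := by
    have h1 : ‖u‖ ^ (m : ℕ) = ‖x‖ ^ (k : ℤ) := by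
      rw [← norm_pow, hum, norm_zpow]
    have h2 : ‖u‖ = (‖u‖ ^ (m : ℕ)) ^ ((m : ℝ)⁻¹) := by
      rw [← Real.rpow_natCast ‖u‖ m, ← Real.rpow_mul (norm_nonneg u),
        mul_inv_cancel₀ (by exact_mod_cast hm0.ne'), Real.rpow_one]
    rw [h2, h1, ← Real.rpow_intCast ‖x‖ k, ← Real.rpow_mul hβ.le]
    congr 1
    rw [Rat.cast_def]
    field_simp
    rw [hk, hm]; ring
  refine ⟨u, ?_, ?_⟩
  · have := (Real.rpow_lt_rpow_left_iff hx).mpr hq1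
    rwa [Real.rpow_logb hβ hx.ne' ha, ← hnorm] at this
  · have := (Real.rpow_lt_rpow_left_iff hx).mpr hq2
    rwa [Real.rpow_logb hβ hx.ne' (ha.trans hab), ← hnorm] at this

lemma my_pow_sub_pow_bound {K : Type*} [NontriviallyNormedField K] [IsUltrametricDist K]
    {r : ℝ} (hr : 0 < r) {u v : K} (hu : ‖u‖ ≤ r) (hv : ‖v‖ ≤ r) (j : ℕ) :
    ‖u ^ (j+1) - v ^ (j+1)‖ ≤ ‖u - v‖ * r ^ j := by
  rw [← geom_sum₂_mul u v (j+1), norm_mul, mul_comm]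
  refine mul_le_mul_of_nonneg_left ?_ (norm_nonneg _)
  refine IsUltrametricDist.norm_sum_le_of_forall_le_of_nonneg (by positivity) ?_
  intro i hi
  rw [Finset.mem_range] at hi
  have hij : i ≤ j := Nat.lt_succ_iff.mp hi
  rw [norm_mul, norm_pow, norm_pow]
  calc ‖u‖ ^ i * ‖v‖ ^ (j + 1 - 1 - i) ≤ r ^ i * r ^ (j + 1 - 1 - i) :=
        mul_le_mul (pow_le_pow_left₀ (norm_nonneg _) hu _)
          (pow_le_pow_left₀ (norm_nonneg _) hv _) (by positivity) (by positivity)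
    _ = r ^ j := by rw [← pow_add]; congr 1; omega

/-- If a non-constant polynomial maps the closed disk of radius `r` about `c` onto
the closed disk of radius `s` about `f(c)`, then `|f(x) - f(y)| ≤ (s/r)·|x - y|`
for all `x, y` in the disk. -/
theorem polynomial_lipschitz_on_closedBall
    {K : Type*} [NontriviallyNormedField K] [IsUltrametricDist K]
    [CompleteSpace K] [IsAlgClosed K]
    (f : Polynomial K) (hf : 0 < f.natDegree) (c : K) (r s : ℝ) (hr : 0 < r) (hs : 0 < s)
    (him : (fun x => f.eval x) '' Metric.closedBall c r = Metric.closedBall (f.eval c) s) :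
    ∀ x ∈ Metric.closedBall c r, ∀ y ∈ Metric.closedBall c r,
      ‖f.eval x - f.eval y‖ ≤ (s / r) * ‖x - y‖ := by
  set n := f.natDegree with hn
  set g := f.comp (X + C c) with hg
  have hgn : g.natDegree = n := by
    rw [hg, natDegree_comp, natDegree_X_add_C, mul_one]
  have hgeval : ∀ t : K, g.eval t = f.eval (t + c) := by
    intro t; rw [hg, eval_comp, eval_add, eval_X, eval_C]
  have hg0 : g.coeff 0 = f.eval c := by
    rw [coeff_zero_eq_eval_zero, hgeval, zero_add]
  -- Key claim: ‖g.coeff i‖ * r ^ i ≤ s for i ≥ 1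
  have key : ∀ i : ℕ, 1 ≤ i → ‖g.coeff i‖ * r ^ i ≤ s := by
    intro i hi
    by_contra hlt
    push_neg at hlt
    obtain ⟨w, hw1, hw2⟩ := my_exists_norm_btwn K hs hlt
    have hw0 : w ≠ 0 := by
      intro h; rw [h, norm_zero] at hw1; linarith
    set P := g - C (f.eval c + w) with hP
    have hP0 : P.coeff 0 = -w := by
      rw [hP, coeff_sub, coeff_C, if_pos rfl, hg0]; ring
    have hPi : P.coeff i = g.coeff i := by
      rw [hP, coeff_sub, coeff_C, if_neg (by omega), sub_zero]
    have hPdeg : P.natDegree = n := by rw [hP, natDegree_sub_C, hgn]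
    have hcard : Multiset.card P.roots = P.natDegree :=
      splits_iff_card_roots.mp (IsAlgClosed.splits P)
    -- there is a root of norm < r
    have hroot : ∃ ρ ∈ P.roots, ‖ρ‖ < r := by
      by_contra hall
      push_neg at hall
      have hfact := C_leadingCoeff_mul_prod_multiset_X_sub_C hcard
      set Q := (P.roots.map fun a => X - C a).prod with hQdef
      have hcoeff : ∀ j, P.coeff j = P.leadingCoeff * Q.coeff j := by
        intro j
        conv_lhs => rw [← hfact]
        rw [coeff_C_mul]
      have h2 := my_coeff_bound hr P.roots hall i
      have h3 : ‖P.coeff i‖ * r ^ i ≤ ‖P.coeff 0‖ := by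
        rw [hcoeff i, hcoeff 0, norm_mul, norm_mul, mul_assoc]
        exact mul_le_mul_of_nonneg_left h2 (norm_nonneg _)
      rw [hPi, hP0, norm_neg] at h3
      linarith
    obtain ⟨ρ, hρmem, hρlt⟩ := hroot
    have hPne : P ≠ 0 := by
      intro h
      apply hw0
      have := hP0
      rw [h, coeff_zero] at this
      exact (neg_eq_zero.mp this.symm)
    have hρroot : P.eval ρ = 0 := (mem_roots hPne).mp hρmem
    have hfρ : f.eval (ρ + c) = f.eval c + w := by
      rw [hP, eval_sub, eval_C, sub_eq_zero] at hρroot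
      rw [← hgeval]; exact hρroot
    have hmem : (ρ + c) ∈ Metric.closedBall c r := by
      rw [Metric.mem_closedBall, dist_eq_norm, add_sub_cancel_right]
      exact hρlt.le
    have himg : f.eval (ρ + c) ∈ Metric.closedBall (f.eval c) s := by
      rw [← him]; exact ⟨ρ + c, hmem, rfl⟩
    rw [hfρ, Metric.mem_closedBall, dist_eq_norm, add_sub_cancel_left] at himg
    linarith
  -- Final estimate
  intro x hx y hy
  rw [Metric.mem_closedBall, dist_eq_norm] at hx hy
  have expand : f.eval x - f.eval y =
      ∑ i ∈ Finset.range (n + 1), g.coeff i * ((x - c) ^ i - (y - c) ^ i) := by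
    have hx' : f.eval x = g.eval (x - c) := by rw [hgeval, sub_add_cancel]
    have hy' : f.eval y = g.eval (y - c) := by rw [hgeval, sub_add_cancel]
    rw [hx', hy', eval_eq_sum_range, eval_eq_sum_range, hgn, ← Finset.sum_sub_distrib]
    exact Finset.sum_congr rfl fun i _ => by ring
  rw [expand]
  refine IsUltrametricDist.norm_sum_le_of_forall_le_of_nonneg (by positivity) ?_
  intro i _
  cases i with
  | zero => simp; positivity
  | succ j =>
    rw [norm_mul]
    have hb := my_pow_sub_pow_bound hr hx hy j
    calc ‖g.coeff (j+1)‖ * ‖(x - c) ^ (j+1) - (y - c) ^ (j+1)‖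
        ≤ ‖g.coeff (j+1)‖ * (‖(x - c) - (y - c)‖ * r ^ j) :=
          mul_le_mul_of_nonneg_left hb (norm_nonneg _)
      _ = (‖g.coeff (j+1)‖ * r ^ j) * ‖x - y‖ := by
          rw [show (x - c) - (y - c) = x - y by ring]; ring
      _ ≤ (s / r) * ‖x - y‖ := by
          refine mul_le_mul_of_nonneg_right ?_ (norm_nonneg _)
          rw [le_div_iff₀ hr, mul_assoc, ← pow_succ]
          exact key (j+1) (by omega)
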